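/- (Combinatorial core of the cutoff k+1 for cliques.) Let k ≥ 1 and m, n ≥ k + 1, and let ḡ and h̄ be arbitrary k-tuples of pairwise distinct vertices of the cliques of sizes m and n, respectively. Then for every d ≥ 0: (i) { μ_d(v) : v a vertex of the clique of size m } = { μ_d(w) : w a vertex of the clique of size n }, where markings are computed with respect to ḡ and h̄ respectively; and (ii) for any two distinct markings a, b in this common set, there is an edge (u, v) in the clique of size m with μ_d(u) = a and μ_d(v) = b, and likewise there is such an edge in the clique of size n. -/

import Mathlib

/-! Markings of topologies with a marked k-tuple, following the paper's
`d`-contraction construction. -/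

noncomputable def dst {α : Type} (l : List α) : List α :=
  @List.destutter α (· ≠ ·) (fun _ _ => Classical.dec _) l

/-- A topology: a finite nonempty directed graph with no self-loops. -/
structure Topo where
  V : Type
  fintypeV : Fintype V
  decEqV : DecidableEq V
  nonemptyV : Nonempty V
  E : V → V → Prop
  no_self_loops : ∀ v, ¬ E v v

attribute [instance] Topo.fintypeV Topo.decEqV Topo.nonemptyV

/-- `Mark k d`: the type of `d`-th markings (independent of the topology). -/
def Mark (k : ℕ) : ℕ → Type
  | 0 => Finset (Fin k)
  | d + 1 => Set (List (Mark k d))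

def Mark.toSet {k d : ℕ} (m : Mark k (d + 1)) : Set (List (Mark k d)) := m

/-- The labeling `Λ`: `Λ (g i) = {i}` and `Λ v = ∅` for unmarked `v`
(for injective `g`). -/
def lab {k : ℕ} (G : Topo) (g : Fin k → G.V) (v : G.V) : Finset (Fin k) :=
  Finset.univ.filter fun i => g i = v

/-- `InX G g v π`: `π` is a directed path starting at `v`, ending at a marked
vertex, with all non-final vertices unmarked.  (The set `X(v)` of the paper.) -/
def InX {k : ℕ} (G : Topo) (g : Fin k → G.V) (v : G.V) (π : List G.V) : Prop :=
  π ≠ [] ∧ π.head? = some v ∧ List.Chain' G.E π ∧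
    (∀ u ∈ π.dropLast, u ∉ Set.range g) ∧
    ∃ w ∈ Set.range g, π.getLast? = some w

/-- The `d`-th marking `μ_d`. -/
noncomputable def mu {k : ℕ} (G : Topo) (g : Fin k → G.V) : (d : ℕ) → G.V → Mark k d
  | 0, v => lab G g v
  | d + 1, v => { s : List (Mark k d) | ∃ π : List G.V, InX G g v π ∧ s = dst (π.map (mu G g d)) }

/-- The clique of size `n`: vertices `Fin n`, edges between all pairs of
distinct vertices. -/
def clique (n : ℕ) (hn : 0 < n) : Topo :=
  haveI : NeZero n := ⟨by omega⟩
  { V := Fin n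
    fintypeV := inferInstance
    decEqV := inferInstance
    nonemptyV := ⟨0⟩
    E := fun i j => i ≠ j
    no_self_loops := fun _ h => h rfl }

attribute [reducible] clique

/- ## Auxiliary development -/


lemma dst_singleton {α : Type} (a : α) : dst [a] = [a] := rfl

lemma dst_pair {α : Type} {a b : α} (h : a ≠ b) : dst [a, b] = [a, b] := by
  unfold dst
  rw [List.destutter_cons_cons, if_pos h]
  rfl

lemma dst_rep {α : Type} {a b : α} (h : a ≠ b) :
    ∀ n, dst (List.replicate (n + 1) a ++ [b]) = [a, b] := by
  intro n
  induction n with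
  | zero => simpa using dst_pair h
  | succ n ih =>
    have e1 : List.replicate (n + 2) a ++ [b] = a :: (List.replicate (n+1) a ++ [b]) := by
      simp [List.replicate_succ]
    have e2 : List.replicate (n+1) a ++ [b] = a :: (List.replicate n a ++ [b]) := by
      simp [List.replicate_succ]
    rw [e1, e2]
    unfold dst
    rw [List.destutter_cons_cons, if_neg (by simp)]
    rw [← List.destutter_cons', ← e2]
    exact ih

/-- The `d`-marking of the `i`-th marked vertex in a clique, abstractly. -/
noncomputable def Fm (k : ℕ) : (d : ℕ) → Fin k → Mark k d
  | 0, i => ({i} : Finset (Fin k))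
  | d + 1, i => ({[Fm k d i]} : Set (List (Mark k d)))

/-- The `d`-marking of an unmarked vertex in a clique, abstractly. -/
noncomputable def Um (k : ℕ) : (d : ℕ) → Mark k d
  | 0 => (∅ : Finset (Fin k))
  | d + 1 => ({l | ∃ j : Fin k, l = [Um k d, Fm k d j]} : Set (List (Mark k d)))

lemma Fm_ne_Um (k : ℕ) (d : ℕ) (i : Fin k) : Fm k d i ≠ Um k d := by
  induction d with
  | zero =>
    exact fun hEq => Finset.singleton_ne_empty i hEq
  | succ d ih =>
    intro hEq
    have h1 : ([Fm k d i]) ∈ ({[Fm k d i]} : Set (List (Mark k d))) := rfl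
    have hEq' : ({[Fm k d i]} : Set (List (Mark k d)))
        = ({l | ∃ j : Fin k, l = [Um k d, Fm k d j]} : Set (List (Mark k d))) := hEq
    have h2 : ([Fm k d i]) ∈ ({l | ∃ j : Fin k, l = [Um k d, Fm k d j]} : Set (List (Mark k d))) := by
      rw [← hEq']; exact h1
    obtain ⟨j, hj⟩ := h2
    simp at hj

/-- Key characterization of `mu` in cliques: marked vertices get `Fm`,
unmarked vertices get `Um`. -/
lemma mu_spec {k m : ℕ} (hm : 0 < m) (g : Fin k → Fin m) (hg : Function.Injective g) (d : ℕ) :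
    (∀ i, mu (clique m hm) g d (g i) = Fm k d i) ∧
    (∀ v : Fin m, v ∉ Set.range g → mu (clique m hm) g d v = Um k d) := by
  induction d with
  | zero =>
    constructor
    · intro i
      show lab (clique m hm) g (g i) = ({i} : Finset (Fin k))
      ext j
      simp [lab, hg.eq_iff]
    · intro v hv
      show lab (clique m hm) g v = (∅ : Finset (Fin k))
      ext j
      simp only [lab, Finset.mem_filter, Finset.mem_univ, true_and, Finset.notMem_empty,
        iff_false]
      exact fun hj => hv ⟨j, hj⟩
  | succ d ih =>
    obtain ⟨ihF, ihU⟩ := ih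
    have hmu : ∀ v : Fin m, mu (clique m hm) g (d+1) v = ({ s : List (Mark k d) |
        ∃ π : List (Fin m), InX (clique m hm) g v π ∧
          s = dst (π.map (mu (clique m hm) g d)) } : Set (List (Mark k d))) :=
      fun _ => rfl
    constructor
    · intro i
      rw [hmu (g i)]
      show _ = ({[Fm k d i]} : Set (List (Mark k d)))
      ext s
      simp only [Set.mem_setOf_eq, Set.mem_singleton_iff]
      constructor
      · rintro ⟨π, ⟨hne, hhead, _, hdrop, _⟩, rfl⟩
        cases π with
        | nil => exact absurd rfl hne
        | cons x l =>
          simp only [List.head?_cons, Option.some.injEq] at hhead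
          subst hhead
          cases l with
          | nil => rw [List.map_singleton, ihF i, dst_singleton]
          | cons y l' =>
            exfalso
            exact hdrop (g i) (by simp [List.dropLast_cons₂]) ⟨i, rfl⟩
      · rintro rfl
        refine ⟨[g i], ⟨by simp, by simp, List.isChain_singleton _, by simp, ⟨g i, ⟨i, rfl⟩, by simp⟩⟩, ?_⟩
        rw [List.map_singleton, ihF i, dst_singleton]
    · intro v hv
      rw [hmu v]
      show _ = ({l | ∃ j : Fin k, l = [Um k d, Fm k d j]} : Set (List (Mark k d)))
      ext s
      simp only [Set.mem_setOf_eq]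
      constructor
      · rintro ⟨π, ⟨hne, hhead, _, hdrop, w, hw, hlast⟩, rfl⟩
        obtain ⟨j, rfl⟩ := hw
        refine ⟨j, ?_⟩
        have hlast' : π.getLast hne = g j := by
          obtain ⟨h', h''⟩ := List.mem_getLast?_eq_getLast hlast
          exact h''.symm
        have hπ : π.dropLast ++ [g j] = π := by
          rw [← hlast']; exact List.dropLast_append_getLast hne
        have hdne : π.dropLast ≠ [] := by
          intro h0
          rw [h0, List.nil_append] at hπ
          rw [← hπ] at hhead
          simp only [List.head?_cons, Option.some.injEq] at hhead
          exact hv ⟨j, hhead⟩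
        have hmap : π.dropLast.map (mu (clique m hm) g d)
            = List.replicate π.dropLast.length (Um k d) := by
          rw [List.eq_replicate_iff]
          refine ⟨by simp, ?_⟩
          intro b hb
          obtain ⟨u, hu, rfl⟩ := List.mem_map.1 hb
          exact ihU u (hdrop u hu)
        obtain ⟨t, ht⟩ : ∃ t, π.dropLast.length = t + 1 :=
          ⟨π.dropLast.length - 1, by have := List.length_pos_iff.2 hdne; omega⟩
        rw [← hπ, List.map_append, List.map_singleton, ihF j, hmap, ht]
        exact dst_rep (Ne.symm (Fm_ne_Um k d j)) t
      · rintro ⟨j, rfl⟩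
        have hvj : v ≠ g j := fun h0 => hv ⟨j, h0.symm⟩
        refine ⟨[v, g j], ⟨by simp, by simp, ?_, ?_, ⟨g j, ⟨j, rfl⟩, by simp⟩⟩, ?_⟩
        · show List.Chain' (fun i j : Fin m => i ≠ j) [v, g j]
          exact List.isChain_pair.2 hvj
        · intro u hu
          have : u = v := by simpa using hu
          subst this; exact hv
        · rw [List.map_cons, List.map_singleton, ihF j, ihU v hv,
            dst_pair (Ne.symm (Fm_ne_Um k d j))]

lemma range_mu {k m : ℕ} (hm : 0 < m) (hkm : k + 1 ≤ m)
    (g : Fin k → Fin m) (hg : Function.Injective g) (d : ℕ) :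
    Set.range (mu (clique m hm) g d) = insert (Um k d) (Set.range (Fm k d)) := by
  obtain ⟨spF, spU⟩ := mu_spec hm g hg d
  ext a
  constructor
  · rintro ⟨v, rfl⟩
    by_cases hv : v ∈ Set.range g
    · obtain ⟨i, rfl⟩ := hv
      exact Or.inr ⟨i, (spF i).symm⟩
    · exact Or.inl (spU v hv)
  · rintro (rfl | ⟨i, rfl⟩)
    · obtain ⟨v, hv⟩ : ∃ v : Fin m, v ∉ Set.range g := by
        by_contra h0
        push_neg at h0
        have hsurj : Function.Surjective g := fun v => h0 v
        have := Fintype.card_le_of_surjective g hsurj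
        simp at this
        omega
      exact ⟨v, spU v hv⟩
    · exact ⟨g i, spF i⟩

/-- combinatorial core of the cutoff `k + 1` for cliques: any two
marked tuples in cliques of sizes `m, n ≥ k + 1` yield the same set of
`d`-markings for every `d`, and every pair of distinct markings in this set is
realized by an edge in both cliques. -/
theorem stmt9 {k m n : ℕ} (hk : 1 ≤ k) (hkm : k + 1 ≤ m) (hkn : k + 1 ≤ n)
    (hm : 0 < m) (hn : 0 < n)
    (g : Fin k → Fin m) (hg : Function.Injective g)
    (h : Fin k → Fin n) (hh : Function.Injective h) (d : ℕ) :
    (Set.range (mu (clique m hm) g d) = Set.range (mu (clique n hn) h d)) ∧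
    (∀ a b : Mark k d,
      a ∈ Set.range (mu (clique m hm) g d) →
      b ∈ Set.range (mu (clique m hm) g d) → a ≠ b →
      (∃ u v : Fin m, (clique m hm).E u v ∧
          mu (clique m hm) g d u = a ∧ mu (clique m hm) g d v = b) ∧
      (∃ u v : Fin n, (clique n hn).E u v ∧
          mu (clique n hn) h d u = a ∧ mu (clique n hn) h d v = b)) := by
  have hrange : Set.range (mu (clique m hm) g d) = Set.range (mu (clique n hn) h d) := by
    rw [range_mu hm hkm g hg d, range_mu hn hkn h hh d]
  refine ⟨hrange, ?_⟩
  intro a b ha hb hab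
  constructor
  · obtain ⟨u, hu⟩ := ha
    obtain ⟨v, hv⟩ := hb
    refine ⟨u, v, ?_, hu, hv⟩
    show u ≠ v
    rintro rfl
    exact hab (hu ▸ hv ▸ rfl)
  · rw [hrange] at ha hb
    obtain ⟨u, hu⟩ := ha
    obtain ⟨v, hv⟩ := hb
    refine ⟨u, v, ?_, hu, hv⟩
    show u ≠ v
    rintro rfl
    exact hab (hu ▸ hv ▸ rfl)
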